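/- arXiv:2305.19442 — 2 statements merged into one kernel-verified Lean document; each statement's English description precedes it below -/
import Mathlib

section
/- Let $g: \mathbb{R}^{d} \to \mathbb{R}$ be $\mu$-strongly convex and $L$-smooth (i.e., $\nabla g$ is $L$-Lipschitz). Then for all $y_0, y_1, y_2 \in \mathbb{R}^d$: $\langle \nabla g(y_0), y_1 - y_2 \rangle \ge g(y_1) - g(y_2) + \frac{\mu}{4}\|y_1 - y_2\|^2 - L \|y_1 - y_0\|^2$. -/
open scoped InnerProductSpace

/-- Perturbed strong convexity (Lemma C.1 of the paper). -/
theorem stmt_3 {d : ℕ} (μ L : ℝ) (hμ : 0 < μ) (hL : 0 < L)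
    (g : EuclideanSpace ℝ (Fin d) → ℝ)
    (g' : EuclideanSpace ℝ (Fin d) → EuclideanSpace ℝ (Fin d))
    (hsc : ∀ y z, g y + ⟪g' y, z - y⟫_ℝ + μ / 2 * ‖z - y‖ ^ 2 ≤ g z)
    (hsmooth : ∀ y z, ‖g' y - g' z‖ ≤ L * ‖y - z‖)
    (y0 y1 y2 : EuclideanSpace ℝ (Fin d)) :
    g y1 - g y2 + μ / 4 * ‖y1 - y2‖ ^ 2 - L * ‖y1 - y0‖ ^ 2 ≤ ⟪g' y0, y1 - y2⟫_ℝ := by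
  have h1 := hsc y0 y2
  have h2 := hsc y1 y0
  have h3 := hsmooth y1 y0
  have hcs : ⟪g' y1 - g' y0, y1 - y0⟫_ℝ ≤ ‖g' y1 - g' y0‖ * ‖y1 - y0‖ :=
    real_inner_le_norm _ _
  have htri : ‖y1 - y2‖ ≤ ‖y1 - y0‖ + ‖y0 - y2‖ := norm_sub_le_norm_sub_add_norm_sub _ _ _
  have e1 : ⟪g' y0, y1 - y2⟫_ℝ = ⟪g' y0, y1 - y0⟫_ℝ + ⟪g' y0, y0 - y2⟫_ℝ := by
    rw [← inner_add_right]; congr 1; abel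
  have e2 : ⟪g' y1 - g' y0, y1 - y0⟫_ℝ = ⟪g' y1, y1 - y0⟫_ℝ - ⟪g' y0, y1 - y0⟫_ℝ :=
    inner_sub_left _ _ _
  have e3 : ⟪g' y1, y0 - y1⟫_ℝ = -⟪g' y1, y1 - y0⟫_ℝ := by
    rw [← inner_neg_right]; congr 1; abel
  have e4 : ⟪g' y0, y2 - y0⟫_ℝ = -⟪g' y0, y0 - y2⟫_ℝ := by
    rw [← inner_neg_right]; congr 1; abel
  have n1 : ‖y2 - y0‖ = ‖y0 - y2‖ := norm_sub_rev _ _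
  have n2 : ‖y0 - y1‖ = ‖y1 - y0‖ := norm_sub_rev _ _
  rw [n1] at h1
  rw [n2] at h2
  have hn1 : (0:ℝ) ≤ ‖y1 - y0‖ := norm_nonneg _
  have hn2 : (0:ℝ) ≤ ‖y0 - y2‖ := norm_nonneg _
  have hn3 : (0:ℝ) ≤ ‖y1 - y2‖ := norm_nonneg _
  have hmul : ‖g' y1 - g' y0‖ * ‖y1 - y0‖ ≤ L * ‖y1 - y0‖ ^ 2 := by
    nlinarith [hsmooth y1 y0]
  have hsq : ‖y1 - y2‖ ^ 2 ≤ (‖y1 - y0‖ + ‖y0 - y2‖) ^ 2 := by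
    apply pow_le_pow_left₀ hn3 htri
  nlinarith [mul_le_mul_of_nonneg_left hsq hμ.le,
    mul_nonneg hμ.le (sq_nonneg (‖y1 - y0‖ - ‖y0 - y2‖))]
end

section
/- Let $g: \mathbb{R}^{d} \to \mathbb{R}$ be $\mu$-strongly convex with minimizer $y^*$ and $L$-smooth, and consider one inexact gradient step $y^+ = y - \gamma h$ where $\mathbb{E}[h] = \sum_k \theta_k \nabla g(y_k)$ is a convex combination ($\theta_k \ge 0$, $\sum_k \theta_k = 1$) of gradients at perturbed points $y_k$. Then $\mathbb{E}\|y^+ - y^*\|^2 \le \left(1 - \frac{\gamma\mu}{2}\right)\|y - y^*\|^2 + \gamma^2 \mathbb{E}\|h\|^2 + 2\gamma L \sum_k \theta_k \|y - y_k\|^2$. -/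
open MeasureTheory
open scoped InnerProductSpace

/-- Per-iteration inner-problem contraction with client drift. -/
theorem stmt_14 {Ω : Type*} [MeasurableSpace Ω] (μpr : Measure Ω) [IsProbabilityMeasure μpr]
    {d m : ℕ} (μ L γ : ℝ) (hμ : 0 < μ) (hL : 0 < L) (hγ : 0 < γ)
    (g : EuclideanSpace ℝ (Fin d) → ℝ)
    (g' : EuclideanSpace ℝ (Fin d) → EuclideanSpace ℝ (Fin d))
    (ystar : EuclideanSpace ℝ (Fin d))
    (hsc : ∀ y z, g y + ⟪g' y, z - y⟫_ℝ + μ / 2 * ‖z - y‖ ^ 2 ≤ g z)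
    (hsmooth : ∀ y z, ‖g' y - g' z‖ ≤ L * ‖y - z‖)
    (hmin : ∀ z, g ystar ≤ g z)
    (θ : Fin m → ℝ) (hθ : ∀ k, 0 ≤ θ k) (hθ1 : ∑ k, θ k = 1)
    (yk : Fin m → EuclideanSpace ℝ (Fin d)) (y : EuclideanSpace ℝ (Fin d))
    (h : Ω → EuclideanSpace ℝ (Fin d)) (hmem : MemLp h 2 μpr)
    (hmean : ∫ ω, h ω ∂μpr = ∑ k, θ k • g' (yk k)) :
    ∫ ω, ‖(y - γ • h ω) - ystar‖ ^ 2 ∂μpr ≤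
      (1 - γ * μ / 2) * ‖y - ystar‖ ^ 2 + γ ^ 2 * ∫ ω, ‖h ω‖ ^ 2 ∂μpr
        + 2 * γ * L * ∑ k, θ k * ‖y - yk k‖ ^ 2 := by
  -- Step 0: gradient at minimizer has nonnegative inner products
  have hgrad0 : ∀ w : EuclideanSpace ℝ (Fin d), 0 ≤ ⟪g' ystar, w - ystar⟫_ℝ := by
    intro w
    by_contra hc
    push_neg at hc
    set c := ⟪g' ystar, w - ystar⟫_ℝ with hcdef
    set t : ℝ := -c / (L * ‖w - ystar‖ ^ 2 + 1) with htdef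
    have hden : (0:ℝ) < L * ‖w - ystar‖ ^ 2 + 1 := by positivity
    have ht : 0 < t := by
      apply div_pos (by linarith) hden
    -- along point z = ystar + t • (w - ystar)
    set z := ystar + t • (w - ystar) with hzdef
    have hz1 : 0 ≤ ⟪g' z, w - ystar⟫_ℝ := by
      have h1 := hsc z ystar
      have h2 := hmin z
      have hzi : ⟪g' z, ystar - z⟫_ℝ = -(t * ⟪g' z, w - ystar⟫_ℝ) := by
        have : ystar - z = -(t • (w - ystar)) := by
          rw [hzdef]; abel
        rw [this, inner_neg_right, real_inner_smul_right]
      rw [hzi] at h1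
      nlinarith [sq_nonneg ‖ystar - z‖, mul_nonneg (le_of_lt hμ) (sq_nonneg ‖ystar - z‖)]
    have hdiff : ‖g' z - g' ystar‖ ≤ L * (t * ‖w - ystar‖) := by
      have := hsmooth z ystar
      have hz2 : z - ystar = t • (w - ystar) := by rw [hzdef]; abel
      calc ‖g' z - g' ystar‖ ≤ L * ‖z - ystar‖ := this
        _ = L * (t * ‖w - ystar‖) := by
            rw [hz2, norm_smul, Real.norm_eq_abs, abs_of_pos ht]
    have hcs : |⟪g' z - g' ystar, w - ystar⟫_ℝ| ≤ ‖g' z - g' ystar‖ * ‖w - ystar‖ :=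
      abs_real_inner_le_norm _ _
    have hsplit : c = ⟪g' z, w - ystar⟫_ℝ - ⟪g' z - g' ystar, w - ystar⟫_ℝ := by
      rw [inner_sub_left]; ring
    have hbound : -c ≤ L * t * ‖w - ystar‖ ^ 2 := by
      have h3 : ⟪g' z - g' ystar, w - ystar⟫_ℝ ≤ L * (t * ‖w - ystar‖) * ‖w - ystar‖ :=
        le_trans (le_abs_self _) (le_trans hcs (by
          apply mul_le_mul_of_nonneg_right hdiff (norm_nonneg _)))
      nlinarith
    -- but L * t * ‖w-ystar‖^2 < -c by choice of t
    have hts : t * (L * ‖w - ystar‖ ^ 2 + 1) = -c := div_mul_cancel₀ _ hden.ne'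
    nlinarith [ht]
  -- lower bound: strong convexity gap at minimizer
  have hgap : ∀ w : EuclideanSpace ℝ (Fin d), μ / 2 * ‖w - ystar‖ ^ 2 ≤ g w - g ystar := by
    intro w
    have := hsc ystar w
    have := hgrad0 w
    linarith
  -- one-step smoothness upper bound
  have hupper : ∀ a b : EuclideanSpace ℝ (Fin d),
      g b ≤ g a + ⟪g' a, b - a⟫_ℝ + L * ‖b - a‖ ^ 2 := by
    intro a b
    have h1 := hsc b a
    have h2 : ⟪g' b, a - b⟫_ℝ = -⟪g' b, b - a⟫_ℝ := by
      rw [← inner_neg_right]; congr 1; abel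
    have h3 : ⟪g' b - g' a, b - a⟫_ℝ ≤ L * ‖b - a‖ ^ 2 := by
      calc ⟪g' b - g' a, b - a⟫_ℝ ≤ ‖g' b - g' a‖ * ‖b - a‖ := real_inner_le_norm _ _
        _ ≤ (L * ‖b - a‖) * ‖b - a‖ :=
            mul_le_mul_of_nonneg_right (hsmooth b a) (norm_nonneg _)
        _ = L * ‖b - a‖ ^ 2 := by ring
    have h4 : ⟪g' b, b - a⟫_ℝ = ⟪g' a, b - a⟫_ℝ + ⟪g' b - g' a, b - a⟫_ℝ := by
      rw [inner_sub_left]; ring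
    have h5 : ‖a - b‖ = ‖b - a‖ := norm_sub_rev _ _
    rw [h2, h4] at h1
    rw [h5] at h1
    nlinarith [sq_nonneg ‖b - a‖, mul_nonneg (le_of_lt hμ) (sq_nonneg ‖b - a‖)]
  -- key per-client bound
  have hkey : ∀ k : Fin m, μ / 4 * ‖y - ystar‖ ^ 2 - L * ‖y - yk k‖ ^ 2
      ≤ ⟪g' (yk k), y - ystar⟫_ℝ := by
    intro k
    have hT1 : g y - g (yk k) - L * ‖y - yk k‖ ^ 2 ≤ ⟪g' (yk k), y - yk k⟫_ℝ := by
      have := hupper (yk k) y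
      linarith
    have hT2 : g (yk k) - g ystar ≤ ⟪g' (yk k), yk k - ystar⟫_ℝ := by
      have h1 := hsc (yk k) ystar
      have h2 : ⟪g' (yk k), ystar - yk k⟫_ℝ = -⟪g' (yk k), yk k - ystar⟫_ℝ := by
        rw [← inner_neg_right]; congr 1; abel
      rw [h2] at h1
      nlinarith [mul_nonneg (le_of_lt hμ) (sq_nonneg ‖ystar - yk k‖)]
    have hsum : ⟪g' (yk k), y - ystar⟫_ℝ
        = ⟪g' (yk k), y - yk k⟫_ℝ + ⟪g' (yk k), yk k - ystar⟫_ℝ := by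
      rw [← inner_add_right]; congr 1; abel
    have hg := hgap y
    have hμ4 : μ / 4 * ‖y - ystar‖ ^ 2 ≤ μ / 2 * ‖y - ystar‖ ^ 2 := by nlinarith [sq_nonneg ‖y - ystar‖]
    linarith
  -- sum of key bounds
  have hGsum : μ / 4 * ‖y - ystar‖ ^ 2 - L * ∑ k, θ k * ‖y - yk k‖ ^ 2
      ≤ ⟪y - ystar, ∑ k, θ k • g' (yk k)⟫_ℝ := by
    rw [inner_sum]
    have : ∀ k : Fin m, θ k * (μ / 4 * ‖y - ystar‖ ^ 2 - L * ‖y - yk k‖ ^ 2)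
        ≤ ⟪y - ystar, θ k • g' (yk k)⟫_ℝ := by
      intro k
      rw [real_inner_smul_right, real_inner_comm]
      exact mul_le_mul_of_nonneg_left (hkey k) (hθ k)
    have e1 : ∑ k, θ k * (μ / 4 * ‖y - ystar‖ ^ 2 - L * ‖y - yk k‖ ^ 2)
        = (∑ k, θ k) * (μ / 4 * ‖y - ystar‖ ^ 2) - L * ∑ k, θ k * ‖y - yk k‖ ^ 2 := by
      rw [Finset.sum_mul, Finset.mul_sum, ← Finset.sum_sub_distrib]
      exact Finset.sum_congr rfl (fun k _ => by ring)
    calc μ / 4 * ‖y - ystar‖ ^ 2 - L * ∑ k, θ k * ‖y - yk k‖ ^ 2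
        = ∑ k, θ k * (μ / 4 * ‖y - ystar‖ ^ 2 - L * ‖y - yk k‖ ^ 2) := by
          rw [e1, hθ1, one_mul]
      _ ≤ ∑ k, ⟪y - ystar, θ k • g' (yk k)⟫_ℝ := Finset.sum_le_sum (fun k _ => this k)
  -- integrability facts
  have hi1 : Integrable h μpr := hmem.integrable one_le_two
  have hi2 : Integrable (fun ω => ‖h ω‖ ^ 2) μpr := hmem.norm.integrable_sq
  have hi3 : Integrable (fun ω => ⟪y - ystar, h ω⟫_ℝ) μpr := hi1.const_inner _
  -- expand the integrand
  have hexp : ∀ ω, ‖(y - γ • h ω) - ystar‖ ^ 2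
      = ‖y - ystar‖ ^ 2 - 2 * γ * ⟪y - ystar, h ω⟫_ℝ + γ ^ 2 * ‖h ω‖ ^ 2 := by
    intro ω
    have h0 : (y - γ • h ω) - ystar = (y - ystar) - γ • h ω := by abel
    rw [h0, @norm_sub_sq_real, real_inner_smul_right, norm_smul, Real.norm_eq_abs,
      mul_pow, sq_abs]
    ring
  have hint : ∫ ω, ‖(y - γ • h ω) - ystar‖ ^ 2 ∂μpr
      = ‖y - ystar‖ ^ 2 - 2 * γ * ⟪y - ystar, ∑ k, θ k • g' (yk k)⟫_ℝ
        + γ ^ 2 * ∫ ω, ‖h ω‖ ^ 2 ∂μpr := by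
    simp_rw [hexp]
    rw [integral_add (by exact (integrable_const _).sub (hi3.const_mul _)) (hi2.const_mul _),
      integral_sub (integrable_const _) (hi3.const_mul _),
      integral_const, integral_const_mul, integral_const_mul,
      integral_inner hi1, hmean]
    simp
  rw [hint]
  have hsumnn : 0 ≤ ∑ k, θ k * ‖y - yk k‖ ^ 2 :=
    Finset.sum_nonneg fun k _ => mul_nonneg (hθ k) (sq_nonneg _)
  nlinarith [mul_le_mul_of_nonneg_left hGsum (by linarith : (0:ℝ) ≤ 2 * γ)]
end
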